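/- A matrix M ∈ 𝓜_{l,n} is dead if and only if there exists a matrix N ∈ 𝓓(X) with N ≤ M. In particular, a matrix M ∈ 𝓜^R_{l,n} belongs to 𝓒(X) if and only if for every matrix N ∈ 𝓓(X) there exist indices i ∈ {0,…,l−1} and j ∈ {0,…,n−1} such that M(i,j) = 0 and N(i,j) = 1. -/

import Mathlib

open Set

/-- A directed path in `Y ⊆ ℝⁿ`: a continuous map from the unit interval, all of whose
coordinate functions are monotone nondecreasing, with values in `Y`. -/
def IsDiPath (n : ℕ) (Y : Set (Fin n → ℝ)) (p : unitInterval → Fin n → ℝ) : Prop :=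
  Continuous p ∧ (∀ t, p t ∈ Y) ∧ ∀ j : Fin n, Monotone fun t => p t j

/-- A total directed path goes from `(0,…,0)` to `(1,…,1)`. -/
def IsTotalDiPath (n : ℕ) (Y : Set (Fin n → ℝ)) (p : unitInterval → Fin n → ℝ) : Prop :=
  IsDiPath n Y p ∧ p 0 = (fun _ => (0:ℝ)) ∧ p 1 = (fun _ => (1:ℝ))

/-- The unit cube `[0,1]^n`. -/
def cube (n : ℕ) : Set (Fin n → ℝ) := {z | ∀ j, z j ∈ Icc (0:ℝ) 1}

/-- `M` has no zero row. -/
def NoZeroRow {l n : ℕ} (M : Fin l → Fin n → Bool) : Prop := ∀ i, ∃ j, M i j = true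

/-- Every column of `M` contains exactly one `1`. -/
def ColUnit {l n : ℕ} (M : Fin l → Fin n → Bool) : Prop := ∀ j, ∃! i, M i j = true

/-- Entrywise order on boolean matrices. -/
def matLE {l n : ℕ} (M N : Fin l → Fin n → Bool) : Prop := ∀ i j, M i j = true → N i j = true

/-- The extended hole `R̃^i_j = ∏_{j'<j} [0,y^i_{j'}) × (x^i_j, y^i_j) × ∏_{j'>j} [0,y^i_{j'})`. -/
def extHole {l n : ℕ} (x y : Fin l → Fin n → ℝ) (i : Fin l) (j : Fin n) : Set (Fin n → ℝ) :=
  {z | z j ∈ Ioo (x i j) (y i j) ∧ ∀ j', j' ≠ j → z j' ∈ Ico (0:ℝ) (y i j')}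

/-- `X_M = [0,1]^n \ ⋃_{(i,j) : M(i,j)=1} R̃^i_j`. -/
def XM {l n : ℕ} (x y : Fin l → Fin n → ℝ) (M : Fin l → Fin n → Bool) : Set (Fin n → ℝ) :=
  cube n \ ⋃ (i : Fin l) (j : Fin n) (_ : M i j = true), extHole x y i j

/-- `M` is dead if `X_M` contains no total directed path. -/
def Dead {l n : ℕ} (x y : Fin l → Fin n → ℝ) (M : Fin l → Fin n → Bool) : Prop :=
  ¬ ∃ p, IsTotalDiPath n (XM x y M) p

/-- `X = [0,1]^n \ ⋃_i R^i` where `R^i = ∏_j (x^i_j, y^i_j)`. -/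
def Xfull {l n : ℕ} (x y : Fin l → Fin n → ℝ) : Set (Fin n → ℝ) :=
  cube n \ ⋃ i : Fin l, {z | ∀ j, z j ∈ Ioo (x i j) (y i j)}

def Csel {l n : ℕ} (x y : Fin l → Fin n → ℝ) (r : Fin n → Fin l) : Prop :=
  ∀ j j' : Fin n, j ≠ j' → x (r j') j' < y (r j) j'

theorem dead_of_csel {l n : ℕ} (hn : 1 ≤ n) (x y : Fin l → Fin n → ℝ)
    (hx : ∀ i j, 0 < x i j) (hxy : ∀ i j, x i j < y i j) (hy1 : ∀ i j, y i j < 1)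
    (M : Fin l → Fin n → Bool) (r : Fin n → Fin l)
    (hM : ∀ j, M (r j) j = true) (hC : Csel x y r) : Dead x y M := by
  rintro ⟨p, ⟨hcont, hmem, hmono⟩, h0, h1⟩
  set P : ℝ → Fin n → ℝ := fun t => p (projIcc 0 1 zero_le_one t) with hPdef
  have hPmono : ∀ j, Monotone fun t => P t j :=
    fun j => (hmono j).comp (monotone_projIcc zero_le_one)
  have hPcont : ∀ j, Continuous fun t => P t j :=
    fun j => ((continuous_apply j).comp hcont).comp continuous_projIcc
  have hPmem : ∀ t, P t ∈ XM x y M := fun t => hmem _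
  have hP0 : ∀ t : ℝ, t ≤ 0 → ∀ j, P t j = 0 := by
    intro t ht j
    have hproj : projIcc (0:ℝ) 1 zero_le_one t = 0 := by
      rw [projIcc_of_le_left _ ht]; rfl
    simp only [hPdef, hproj, h0]
  have hP1 : ∀ t : ℝ, 1 ≤ t → ∀ j, P t j = 1 := by
    intro t ht j
    have hproj : projIcc (0:ℝ) 1 zero_le_one t = 1 := by
      rw [projIcc_of_right_le _ ht]; rfl
    simp only [hPdef, hproj, h1]
  set Tv : Fin n → ℝ → ℝ := fun j v => sInf {t | v ≤ P t j} with hTvdef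
  set Sv : Fin n → ℝ → ℝ := fun j v => sSup {t | P t j ≤ v} with hSvdef
  have hAbdd : ∀ (j : Fin n) (v : ℝ), 0 < v → BddBelow {t | v ≤ P t j} := by
    intro j v hv0
    refine ⟨0, fun t ht => ?_⟩
    by_contra htneg
    push_neg at htneg
    have h0' := hP0 t htneg.le j
    have : v ≤ (0:ℝ) := by rw [← h0']; exact ht
    linarith
  have hBbdd : ∀ (j : Fin n) (v : ℝ), v < 1 → BddAbove {t | P t j ≤ v} := by
    intro j v hv1
    refine ⟨1, fun t ht => ?_⟩
    by_contra htg
    push_neg at htg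
    have h1' := hP1 t htg.le j
    have : (1:ℝ) ≤ v := by rw [← h1']; exact ht
    linarith
  have hTmem : ∀ (j : Fin n) (v : ℝ), 0 < v → v ≤ 1 → v ≤ P (Tv j v) j := by
    intro j v hv0 hv1
    exact IsClosed.csInf_mem (isClosed_le continuous_const (hPcont j))
      ⟨1, by simp [hP1 1 le_rfl j, hv1]⟩ (hAbdd j v hv0)
  have hSmem : ∀ (j : Fin n) (v : ℝ), 0 ≤ v → v < 1 → P (Sv j v) j ≤ v := by
    intro j v hv0 hv1
    exact IsClosed.csSup_mem (isClosed_le (hPcont j) continuous_const)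
      ⟨0, by simp [hP0 0 le_rfl j, hv0]⟩ (hBbdd j v hv1)
  have hT2 : ∀ (j : Fin n) (v t : ℝ), 0 < v → t < Tv j v → P t j < v := by
    intro j v t hv0 ht
    by_contra hge
    push_neg at hge
    exact absurd (csInf_le (hAbdd j v hv0) hge) (not_le.mpr ht)
  have hS2 : ∀ (j : Fin n) (v t : ℝ), v < 1 → Sv j v < t → v < P t j := by
    intro j v t hv1 ht
    by_contra hle
    push_neg at hle
    exact absurd (le_csSup (hBbdd j v hv1) hle) (not_le.mpr ht)
  -- the escape lemma
  have hesc : ∀ (i : Fin l) (j : Fin n), M i j = true →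
      ∃ j', j' ≠ j ∧ Tv j' (y i j') ≤ Sv j (x i j) := by
    intro i j hij
    by_contra hcon
    push_neg at hcon
    have hself : Sv j (x i j) < Tv j (y i j) := by
      by_contra hle
      push_neg at hle
      have ha := hTmem j (y i j) ((hx i j).trans (hxy i j)) (hy1 i j).le
      have hb := hSmem j (x i j) (hx i j).le ((hxy i j).trans (hy1 i j))
      have := hPmono j hle
      simp only at this
      linarith [hxy i j]
    have hall : ∀ j', Sv j (x i j) < Tv j' (y i j') := by
      intro j'
      by_cases h : j' = j
      · rw [h]; exact hself
      · exact hcon j' h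
    obtain ⟨j₀, -, hj₀⟩ := Finset.exists_min_image Finset.univ
      (fun j' => Tv j' (y i j')) ⟨⟨0, hn⟩, Finset.mem_univ _⟩
    set σ := Sv j (x i j) with hσ
    set m := Tv j₀ (y i j₀) with hm
    have hσm : σ < m := hall j₀
    set t' := (σ + m)/2 with ht'
    have ht1 : σ < t' := by rw [ht']; linarith
    have ht2 : ∀ j', t' < Tv j' (y i j') := by
      intro j'
      have := hj₀ j' (Finset.mem_univ _)
      try simp only at this
      rw [ht']
      calc (σ + m)/2 < m := by linarith
        _ ≤ _ := this
    have hmemX := hPmem t'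
    have hcube := hmemX.1
    refine hmemX.2 ?_
    refine mem_iUnion.mpr ⟨i, mem_iUnion.mpr ⟨j, mem_iUnion.mpr ⟨hij, ?_, ?_⟩⟩⟩
    · exact ⟨hS2 j (x i j) t' ((hxy i j).trans (hy1 i j)) ht1,
        hT2 j (y i j) t' ((hx i j).trans (hxy i j)) (ht2 j)⟩
    · intro j' hj'
      exact ⟨(hcube j').1, hT2 j' (y i j') t' ((hx i j').trans (hxy i j')) (ht2 j')⟩
  -- conclude by infinite descent
  have key : ∀ j : Fin n, ∃ j', Sv j' (x (r j') j') < Sv j (x (r j) j) := by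
    intro j
    obtain ⟨j', hne, hle⟩ := hesc (r j) j (hM j)
    refine ⟨j', lt_of_lt_of_le ?_ hle⟩
    by_contra hge
    push_neg at hge
    have ha := hTmem j' (y (r j) j') ((hx (r j) j').trans (hxy (r j) j')) (hy1 (r j) j').le
    have hb := hSmem j' (x (r j') j') (hx (r j') j').le ((hxy (r j') j').trans (hy1 (r j') j'))
    have := hPmono j' hge
    simp only at this
    have hxy' := hC j j' hne.symm
    linarith
  obtain ⟨j₀, -, hmin⟩ := Finset.exists_min_image Finset.univ
    (fun j => Sv j (x (r j) j)) ⟨⟨0, hn⟩, Finset.mem_univ _⟩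
  obtain ⟨j', hlt⟩ := key j₀
  exact absurd (hmin j' (Finset.mem_univ _)) (not_le.mpr hlt)

theorem exists_clean {l n : ℕ} (x y : Fin l → Fin n → ℝ)
    (s : Finset (Fin l × Fin n)) (hs : s.Nonempty)
    (Hinv : ¬ ∃ r : Fin n → Fin l, (∀ j, (r j, j) ∈ s) ∧ Csel x y r) :
    ∃ e ∈ s, ∃ c : Fin n, c ≠ e.2 ∧ ∀ i' : Fin l, (i', c) ∈ s → y e.1 c ≤ x i' c := by
  by_cases hcols : ∀ c : Fin n, ∃ i', (i', c) ∈ s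
  · by_contra hcon
    push_neg at hcon
    choose rmin hrmem hrmin using fun c : Fin n =>
      Finset.exists_min_image (s.filter (fun e => e.2 = c)) (fun e => x e.1 c) (by
        obtain ⟨i', hi'⟩ := hcols c
        exact ⟨(i', c), Finset.mem_filter.mpr ⟨hi', rfl⟩⟩)
    have hr2 : ∀ c, (rmin c).2 = c := fun c => (Finset.mem_filter.mp (hrmem c)).2
    have hr1 : ∀ c, rmin c ∈ s := fun c => (Finset.mem_filter.mp (hrmem c)).1
    refine Hinv ⟨fun c => (rmin c).1, fun c => ?_, fun j j' hne => ?_⟩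
    · have : ((rmin c).1, c) = rmin c := Prod.ext rfl (hr2 c).symm
      rw [this]; exact hr1 c
    · -- goal : x (rmin j').1 j' < y (rmin j).1 j'
      have hne' : j' ≠ (rmin j).2 := by rw [hr2 j]; exact hne.symm
      obtain ⟨i', hi's, hxlt⟩ := hcon (rmin j) (hr1 j) j' hne'
      have hmin := hrmin j' (i', j') (Finset.mem_filter.mpr ⟨hi's, rfl⟩)
      calc x (rmin j').1 j' ≤ x i' j' := hmin
        _ < y (rmin j).1 j' := hxlt
  · push_neg at hcols
    obtain ⟨c, hc⟩ := hcols
    obtain ⟨e, he⟩ := hs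
    have hec : e.2 ≠ c := by
      intro h
      exact hc e.1 (by rw [← h]; exact he)
    exact ⟨e, he, c, hec.symm, fun i' hi' => absurd hi' (hc i')⟩

theorem exists_list {l n : ℕ} (x y : Fin l → Fin n → ℝ) (N : ℕ) :
    ∀ (s : Finset (Fin l × Fin n)), s.card ≤ N →
    (¬ ∃ r : Fin n → Fin l, (∀ j, (r j, j) ∈ s) ∧ Csel x y r) →
    ∃ es : List ((Fin l × Fin n) × Fin n),
      (∀ e ∈ s, ∃ q ∈ es, q.1 = e) ∧
      (∀ q ∈ es, q.1 ∈ s) ∧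
      (∀ q ∈ es, q.2 ≠ q.1.2) ∧
      List.Pairwise (fun q q' => q'.1.2 = q.2 → y q.1.1 q.2 ≤ x q'.1.1 q'.1.2) es := by
  induction N with
  | zero =>
    intro s hcard _
    have : s = ∅ := Finset.card_eq_zero.mp (Nat.le_zero.mp hcard)
    exact ⟨[], by simp [this], by simp, by simp, List.Pairwise.nil⟩
  | succ N ih =>
    intro s hcard Hinv
    rcases s.eq_empty_or_nonempty with rfl | hs
    · exact ⟨[], by simp, by simp, by simp, List.Pairwise.nil⟩
    obtain ⟨e, hes, c, hc, hclean⟩ := exists_clean x y s hs Hinv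
    have hcard' : (s.erase e).card ≤ N := by
      have := Finset.card_erase_of_mem hes
      have := Finset.card_pos.mpr hs
      omega
    have Hinv' : ¬ ∃ r, (∀ j, (r j, j) ∈ s.erase e) ∧ Csel x y r := by
      rintro ⟨r, hr, hCr⟩
      exact Hinv ⟨r, fun j => Finset.mem_of_mem_erase (hr j), hCr⟩
    obtain ⟨es, hcov, hP0, hP2, hP3⟩ := ih (s.erase e) hcard' Hinv'
    refine ⟨(e, c) :: es, ?_, ?_, ?_, ?_⟩
    · intro e' he'
      by_cases h : e' = e
      · exact ⟨(e, c), List.mem_cons_self, h.symm⟩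
      · obtain ⟨q, hq, hq1⟩ := hcov e' (Finset.mem_erase.mpr ⟨h, he'⟩)
        exact ⟨q, List.mem_cons_of_mem _ hq, hq1⟩
    · intro q hq
      rcases List.mem_cons.mp hq with rfl | hq
      · exact hes
      · exact Finset.mem_of_mem_erase (hP0 q hq)
    · intro q hq
      rcases List.mem_cons.mp hq with rfl | hq
      · exact hc
      · exact hP2 q hq
    · refine List.Pairwise.cons ?_ hP3
      intro q' hq' heq
      have hmem : q'.1 ∈ s := Finset.mem_of_mem_erase (hP0 q' hq')
      have h1 : (q'.1.1, q'.1.2) ∈ s := by rw [Prod.mk.eta]; exact hmem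
      simp only at heq
      rw [heq] at h1
      have := hclean q'.1.1 h1
      simp only
      rw [heq]
      exact this
noncomputable def lev {l n : ℕ} (y : Fin l → Fin n → ℝ)
    (es : List ((Fin l × Fin n) × Fin n)) (j : Fin n) : ℕ → ℝ
  | 0 => 0
  | k+1 =>
    if h : k < es.length then
      (if (es[k]'h).2 = j then max (lev y es j k) (y (es[k]'h).1.1 j) else lev y es j k)
    else 1

theorem lev_le_one {l n : ℕ} {y : Fin l → Fin n → ℝ} (hy1 : ∀ i j, y i j ≤ 1)
    (es : List ((Fin l × Fin n) × Fin n)) (j : Fin n) (k : ℕ) : lev y es j k ≤ 1 := by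
  induction k with
  | zero => simp [lev]
  | succ k ih =>
    simp only [lev]
    split_ifs with h1 h2
    · exact max_le ih (hy1 _ _)
    · exact ih
    · exact le_refl 1

theorem lev_nonneg {l n : ℕ} {y : Fin l → Fin n → ℝ}
    (es : List ((Fin l × Fin n) × Fin n)) (j : Fin n) (k : ℕ) : 0 ≤ lev y es j k := by
  induction k with
  | zero => simp [lev]
  | succ k ih =>
    simp only [lev]
    split_ifs with h1 h2
    · exact le_trans ih (le_max_left _ _)
    · exact ih
    · exact zero_le_one

theorem lev_step {l n : ℕ} {y : Fin l → Fin n → ℝ} (hy1 : ∀ i j, y i j ≤ 1)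
    (es : List ((Fin l × Fin n) × Fin n)) (j : Fin n) (k : ℕ) :
    lev y es j k ≤ lev y es j (k+1) := by
  simp only [lev]
  split_ifs with h1 h2
  · exact le_max_left _ _
  · exact le_rfl
  · exact lev_le_one hy1 es j k

theorem lev_mono {l n : ℕ} {y : Fin l → Fin n → ℝ} (hy1 : ∀ i j, y i j ≤ 1)
    (es : List ((Fin l × Fin n) × Fin n)) (j : Fin n) : Monotone (lev y es j) :=
  monotone_nat_of_le_succ (lev_step hy1 es j)

theorem lev_final {l n : ℕ} {y : Fin l → Fin n → ℝ}
    (es : List ((Fin l × Fin n) × Fin n)) (j : Fin n) (k : ℕ) (hk : es.length ≤ k) :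
    lev y es j (k+1) = 1 := by
  simp only [lev]
  rw [dif_neg (by omega)]

theorem alive_of_not_csel {l n : ℕ} (x y : Fin l → Fin n → ℝ)
    (hx : ∀ i j, 0 < x i j) (hy1 : ∀ i j, y i j < 1)
    (M : Fin l → Fin n → Bool)
    (H : ¬ ∃ r : Fin n → Fin l, (∀ j, M (r j) j = true) ∧ Csel x y r) :
    ∃ p, IsTotalDiPath n (XM x y M) p := by
  classical
  set s : Finset (Fin l × Fin n) := Finset.univ.filter (fun e => M e.1 e.2 = true) with hsdef
  have Hinv : ¬ ∃ r, (∀ j, (r j, j) ∈ s) ∧ Csel x y r := by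
    rintro ⟨r, hr, hC⟩
    exact H ⟨r, fun j => (Finset.mem_filter.mp (hr j)).2, hC⟩
  obtain ⟨es, hcov, hP0, hP2, hP3⟩ := exists_list x y s.card s le_rfl Hinv
  set S : ℕ := es.length + 1 with hSdef
  have hS0 : (0:ℝ) < (S:ℝ) := by positivity
  set cl : ℝ → ℝ := fun u => min 1 (max 0 u) with hcl
  have clmono : Monotone cl := fun a b h => min_le_min le_rfl (max_le_max le_rfl h)
  have clcont : Continuous cl := continuous_const.min (continuous_const.max continuous_id)
  have cl0 : ∀ u : ℝ, u ≤ 0 → cl u = 0 := by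
    intro u hu; simp only [hcl]
    rw [max_eq_left hu, min_eq_right zero_le_one]
  have cl1 : ∀ u : ℝ, 1 ≤ u → cl u = 1 := by
    intro u hu; simp only [hcl]
    rw [max_eq_right (le_trans zero_le_one hu), min_eq_left hu]
  have clnn : ∀ u : ℝ, 0 ≤ cl u := fun u => le_min zero_le_one (le_max_left _ _)
  set L : Fin n → ℕ → ℝ := lev y es with hLdef
  have hd : ∀ (j : Fin n) (k : ℕ), 0 ≤ L j (k+1) - L j k := by
    intro j k
    have := lev_step (fun i j => (hy1 i j).le) es j k
    simp only [hLdef]; linarith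
  set p : unitInterval → Fin n → ℝ :=
    fun t j => ∑ k ∈ Finset.range S, (L j (k+1) - L j k) * cl ((t:ℝ) * (S:ℝ) - (k:ℝ)) with hp
  -- evaluation at stage times
  have heval : ∀ m : ℕ, m ≤ S → ∀ t : unitInterval, (t:ℝ) * (S:ℝ) = (m:ℝ) →
      ∀ j, p t j = L j m := by
    intro m hm t ht j
    have hterm1 : ∀ k ∈ Finset.range m,
        (L j (k+1) - L j k) * cl ((t:ℝ) * (S:ℝ) - (k:ℝ)) = L j (k+1) - L j k := by
      intro k hk
      have hk' : k < m := Finset.mem_range.mp hk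
      have : (1:ℝ) ≤ (t:ℝ) * (S:ℝ) - (k:ℝ) := by
        rw [ht]
        have : (k:ℝ) + 1 ≤ (m:ℝ) := by exact_mod_cast Nat.succ_le_of_lt hk'
        linarith
      rw [cl1 _ this, mul_one]
    have hterm2 : ∀ k ∈ Finset.Ico m S,
        (L j (k+1) - L j k) * cl ((t:ℝ) * (S:ℝ) - (k:ℝ)) = 0 := by
      intro k hk
      have hk' : m ≤ k := (Finset.mem_Ico.mp hk).1
      have : (t:ℝ) * (S:ℝ) - (k:ℝ) ≤ 0 := by
        rw [ht]
        have : (m:ℝ) ≤ (k:ℝ) := by exact_mod_cast hk'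
        linarith
      rw [cl0 _ this, mul_zero]
    have hsplit : ∑ k ∈ Finset.range m, ((L j (k+1) - L j k) * cl ((t:ℝ) * (S:ℝ) - (k:ℝ)))
        + ∑ k ∈ Finset.Ico m S, ((L j (k+1) - L j k) * cl ((t:ℝ) * (S:ℝ) - (k:ℝ)))
        = p t j := by
      simp only [hp, Finset.range_eq_Ico]
      exact Finset.sum_Ico_consecutive _ (Nat.zero_le m) hm
    rw [← hsplit, Finset.sum_congr rfl hterm1, Finset.sum_congr rfl hterm2,
      Finset.sum_range_sub (fun k => L j k) m, Finset.sum_const_zero]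
    have hL0 : L j 0 = 0 := by simp [hLdef, lev]
    rw [hL0]; ring
  have hpmono : ∀ j, Monotone fun t : unitInterval => p t j := by
    intro j a b hab
    apply Finset.sum_le_sum
    intro k _
    refine mul_le_mul_of_nonneg_left (clmono ?_) (hd j k)
    have hab' : (a:ℝ) ≤ (b:ℝ) := hab
    have := mul_le_mul_of_nonneg_right hab' hS0.le
    linarith
  have hpcont : Continuous p := by
    apply continuous_pi
    intro j
    apply continuous_finset_sum
    intro k _
    exact continuous_const.mul (clcont.comp
      ((continuous_subtype_val.mul continuous_const).sub continuous_const))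
  have hp0 : p 0 = fun _ => (0:ℝ) := by
    funext j
    have : ((0:unitInterval):ℝ) * (S:ℝ) = ((0:ℕ):ℝ) := by norm_num
    rw [heval 0 (Nat.zero_le S) 0 this j]
    simp [hLdef, lev]
  have hp1 : p 1 = fun _ => (1:ℝ) := by
    funext j
    have : ((1:unitInterval):ℝ) * (S:ℝ) = ((S:ℕ):ℝ) := by norm_num
    rw [heval S le_rfl 1 this j]
    simp only [hLdef, hSdef]
    exact lev_final es j es.length le_rfl
  have hpnn : ∀ t j, 0 ≤ p t j := by
    intro t j
    apply Finset.sum_nonneg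
    intro k _
    exact mul_nonneg (hd j k) (clnn _)
  have hple : ∀ t j, p t j ≤ 1 := by
    intro t j
    calc p t j ≤ p 1 j := hpmono j (unitInterval.le_one' (t := t))
      _ = 1 := by rw [hp1]
  refine ⟨p, ⟨hpcont, ?_, hpmono⟩, hp0, hp1⟩
  intro t
  refine ⟨fun j => ⟨hpnn t j, hple t j⟩, ?_⟩
  intro hmem
  simp only [Set.mem_iUnion] at hmem
  obtain ⟨i, j, hij, hhole⟩ := hmem
  have hhole' : p t j ∈ Set.Ioo (x i j) (y i j) ∧
      ∀ j', j' ≠ j → p t j' ∈ Set.Ico (0:ℝ) (y i j') := hhole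
  -- find the index of (i,j) in es
  have hijs : (i, j) ∈ s := Finset.mem_filter.mpr ⟨Finset.mem_univ _, hij⟩
  obtain ⟨q, hqes, hq1⟩ := hcov (i, j) hijs
  obtain ⟨m, hm, hqm⟩ := List.mem_iff_getElem.mp hqes
  set c : Fin n := q.2 with hcdef
  have hcj : c ≠ j := by
    have := hP2 q hqes
    rw [hq1] at this
    exact this
  -- F1 : levels of column j stay below x i j up to stage m+1
  have F1 : ∀ k, k ≤ m + 1 → L j k ≤ x i j := by
    intro k hk
    induction k with
    | zero => simpa [hLdef, lev] using (hx i j).le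
    | succ k ih =>
      have hkm : k ≤ m := Nat.le_of_succ_le_succ hk
      have hkl : k < es.length := lt_of_le_of_lt hkm hm
      have ihk := ih (le_trans hkm (Nat.le_succ m))
      simp only [hLdef, lev]
      rw [dif_pos hkl]
      by_cases hj2 : (es[k]'hkl).2 = j
      · rw [if_pos hj2]
        refine max_le ihk ?_
        rcases Nat.lt_or_ge k m with hlt | hge
        · -- pairwise
          have hR := List.pairwise_iff_getElem.mp hP3 k m hkl hm hlt
          have harg : (es[m]'hm).1.2 = (es[k]'hkl).2 := by
            rw [hqm, hq1, hj2]
          have := hR harg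
          rw [hqm, hq1] at this
          simp only at this
          rw [hj2] at this
          exact this
        · -- k = m : contradiction with hcj
          have hkm' : k = m := le_antisymm hkm hge
          exfalso
          apply hcj
          subst hkm'
          rw [hcdef, ← hqm]
          exact hj2
      · rw [if_neg hj2]
        exact ihk
  -- F2 : level of column c reaches y i c at stage m+1
  have F2 : y i c ≤ L c (m+1) := by
    simp only [hLdef, lev]
    rw [dif_pos hm, hqm]
    rw [if_pos rfl]
    have : q.1.1 = i := by rw [hq1]
    rw [this]
    exact le_max_right _ _
  -- the stage time
  have hmS : m + 1 ≤ S := by omega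
  set tm : ℝ := ((m+1 : ℕ):ℝ) / (S:ℝ) with htm
  have htm0 : 0 ≤ tm := by positivity
  have htm1 : tm ≤ 1 := by
    rw [htm, div_le_one hS0]
    exact_mod_cast hmS
  set t' : unitInterval := ⟨tm, htm0, htm1⟩ with ht'
  have ht'eval : (t' : ℝ) * (S:ℝ) = ((m+1:ℕ):ℝ) := by
    simp only [ht', htm]
    exact div_mul_cancel₀ _ (ne_of_gt hS0)
  have hpt'j : p t' j = L j (m+1) := heval (m+1) hmS t' ht'eval j
  have hpt'c : p t' c = L c (m+1) := heval (m+1) hmS t' ht'eval c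
  -- p t j > x i j ≥ p t' j, so t' < t
  have hlt : t' ≤ t := by
    by_contra hcon
    push_neg at hcon
    have := hpmono j hcon.le
    simp only at this
    rw [hpt'j] at this
    have h1 := hhole'.1.1
    have h2 := F1 (m+1) le_rfl
    linarith
  have hyc : y i c ≤ p t c := by
    calc y i c ≤ L c (m+1) := F2
      _ = p t' c := hpt'c.symm
      _ ≤ p t c := hpmono c hlt
  have := (hhole'.2 c hcj).2
  linarith
theorem stmt4 {l n : ℕ} (hn : 1 ≤ n) (hl : 1 ≤ l)
    (x y : Fin l → Fin n → ℝ)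
    (hx : ∀ i j, 0 < x i j) (hxy : ∀ i j, x i j < y i j) (hy1 : ∀ i j, y i j < 1)
    (M : Fin l → Fin n → Bool) :
    (Dead x y M ↔ ∃ N : Fin l → Fin n → Bool, ColUnit N ∧ Dead x y N ∧ matLE N M) ∧
      (NoZeroRow M →
        ((∃ p, IsTotalDiPath n (XM x y M) p) ↔
          ∀ N : Fin l → Fin n → Bool, ColUnit N → Dead x y N →
            ∃ i j, M i j = false ∧ N i j = true)) := by
  classical
  have part1 : Dead x y M ↔ ∃ N : Fin l → Fin n → Bool, ColUnit N ∧ Dead x y N ∧ matLE N M := by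
    constructor
    · intro hdead
      have hr : ∃ r : Fin n → Fin l, (∀ j, M (r j) j = true) ∧ Csel x y r := by
        by_contra Hc
        exact hdead (alive_of_not_csel x y hx hy1 M Hc)
      obtain ⟨r, hrM, hrC⟩ := hr
      refine ⟨fun i j => decide (r j = i), ?_, ?_, ?_⟩
      · intro j
        refine ⟨r j, by simp, fun i hi => ?_⟩
        have : r j = i := by simpa using hi
        exact this.symm
      · exact dead_of_csel hn x y hx hxy hy1 _ r (fun j => by simp) hrC
      · intro i j hij
        have : r j = i := by simpa using hij
        rw [← this]
        exact hrM j
    · rintro ⟨N, _hCU, hND, hle⟩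
      rintro ⟨p, ⟨hc, hm, hmn⟩, h0, h1⟩
      refine hND ⟨p, ⟨hc, fun t => ?_, hmn⟩, h0, h1⟩
      obtain ⟨hcube, hnot⟩ := hm t
      refine ⟨hcube, fun hmem => hnot ?_⟩
      simp only [Set.mem_iUnion] at hmem ⊢
      obtain ⟨i, j, hN, hh⟩ := hmem
      exact ⟨i, j, hle i j hN, hh⟩
  refine ⟨part1, fun _hrow => ?_⟩
  constructor
  · intro hp N hCU hND
    by_contra hcon
    push_neg at hcon
    have hle : matLE N M := by
      intro i j hN
      by_cases hM : M i j = true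
      · exact hM
      · have hMf : M i j = false := by
          cases hMij : M i j
          · rfl
          · exact absurd hMij hM
        exact absurd hN (hcon i j hMf)
    exact (part1.mpr ⟨N, hCU, hND, hle⟩) hp
  · intro hall
    by_contra hdead
    obtain ⟨N, hCU, hND, hle⟩ := part1.mp hdead
    obtain ⟨i, j, hMf, hNt⟩ := hall N hCU hND
    have := hle i j hNt
    rw [hMf] at this
    exact Bool.false_ne_true this
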